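/- Let a and β be real numbers with β > a. Let (ρ_i)_{i∈ι} be a family of complex numbers indexed by a countable set ι such that ρ_i ≠ 2β − a and ρ_i ≠ a for every i, such that both families i ↦ (1 + |Re ρ_i|)/(1 + |ρ_i + a − 2β|)² and i ↦ (1 + |Re ρ_i|)/(1 + |ρ_i − a|)² are summable, and such that there is a bijection σ : ι → ι with ρ_{σ(i)} = 2β − ρ_i for every i (encoding that the multiset is invariant, with multiplicities, under ρ ↦ 2β − ρ). Then for every integer n ≥ 1 the family i ↦ Re[1 − ((ρ_i − a)/(ρ_i + a − 2β))^n] is summable, and the following three conditions are equivalent: (1) Re ρ_i = β for every i; (2) for every integer n ≥ 1, ∑_i Re[1 − ((ρ_i − a)/(ρ_i + a − 2β))^n] ≥ 0; (3) for every ε > 0 there exists a constant c(ε) > 0 such that ∑_i Re[1 − ((ρ_i − a)/(ρ_i + a − 2β))^n] ≥ −c(ε)·e^{εn} for all integers n ≥ 1. -/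

import Mathlib

set_option maxHeartbeats 1000000

open Complex Filter

noncomputable def Complex.abs : AbsoluteValue ℂ ℝ := IsAbsoluteValue.toAbsoluteValue (norm : ℂ → ℝ)

theorem Complex.sq_abs (z : ℂ) : Complex.abs z ^ 2 = Complex.normSq z := Complex.sq_norm z

theorem Complex.abs_ofReal (r : ℝ) : Complex.abs (r : ℂ) = |r| := Complex.norm_real r

theorem Complex.abs_natCast (n : ℕ) : Complex.abs (n : ℂ) = n := Complex.norm_natCast n

theorem Complex.norm_eq_abs (z : ℂ) : ‖z‖ = Complex.abs z := rfl

theorem Complex.abs_re_le_abs (z : ℂ) : |z.re| ≤ Complex.abs z := Complex.abs_re_le_norm z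

theorem Complex.re_le_abs (z : ℂ) : z.re ≤ Complex.abs z := Complex.re_le_norm z

private lemma absSq_identity (a β : ℝ) (z : ℂ) :
    Complex.abs (z - a) ^ 2 - Complex.abs (z + a - 2*β) ^ 2
      = 4*(β-a)*(z.re - β) := by
  rw [Complex.sq_abs, Complex.sq_abs]
  simp [Complex.normSq_apply, Complex.add_re, Complex.sub_re, Complex.add_im, Complex.sub_im]
  ring

private lemma T_rec_bound (w : ℂ) (δ : ℝ) (hw : Complex.abs w ≤ δ) :
    ∀ n : ℕ, Complex.abs (1 - (1+w)^n + n*w) ≤ n^2 * (Complex.abs w)^2 * (1+δ)^n := by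
  have hδ0 : 0 ≤ δ := le_trans (Complex.abs.nonneg w) hw
  have h1δ : (1:ℝ) ≤ 1 + δ := by linarith
  intro n
  induction n with
  | zero => simp
  | succ n ih =>
    have key : (1 - (1+w)^(n+1) + ((n:ℕ)+1:ℂ)*w)
        = (1+w)*(1 - (1+w)^n + n*w) - n*w^2 := by ring
    have h1w : Complex.abs (1+w) ≤ 1 + δ := by
      calc Complex.abs (1+w) ≤ Complex.abs 1 + Complex.abs w := Complex.abs.add_le _ _
      _ ≤ 1 + δ := by simp [hw]
    have hpow1 : (1:ℝ) ≤ (1+δ)^(n+1) := one_le_pow₀ h1δ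
    have hA : (0:ℝ) ≤ (Complex.abs w)^2 := sq_nonneg _
    have hn0 : (0:ℝ) ≤ (n:ℝ) := Nat.cast_nonneg n
    have step1 : Complex.abs (1 - (1+w)^(n+1) + ((n:ℕ)+1:ℂ)*w)
        ≤ (1+δ) * (n^2 * (Complex.abs w)^2 * (1+δ)^n) + n * (Complex.abs w)^2 := by
      rw [key]
      refine le_trans (Complex.abs.sub_le_add _ _) ?_
      rw [map_mul, map_mul, map_pow]
      have h2 : Complex.abs (1+w) * Complex.abs (1 - (1+w)^n + n*w)
          ≤ (1+δ) * (n^2 * (Complex.abs w)^2 * (1+δ)^n) :=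
        mul_le_mul h1w ih (Complex.abs.nonneg _) (by linarith)
      simp only [Complex.abs_natCast]
      linarith
    have cast1 : ((n+1:ℕ):ℂ) = ((n:ℕ)+1:ℂ) := by push_cast; ring
    have cast2 : ((n+1:ℕ):ℝ) = ((n:ℕ)+1:ℝ) := by push_cast; ring
    rw [cast1, cast2]
    refine le_trans step1 ?_
    have e1 : (1+δ) * ((n:ℝ)^2 * (Complex.abs w)^2 * (1+δ)^n)
        = (n:ℝ)^2 * (Complex.abs w)^2 * (1+δ)^(n+1) := by ring
    rw [e1]
    nlinarith [mul_le_mul_of_nonneg_left hpow1 (mul_nonneg hn0 hA)]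


private lemma return_to_one {ι : Type*} (F : Finset ι) (u : ι → ℂ)
    (hu : ∀ i ∈ F, Complex.abs (u i) = 1) (δ : ℝ) (hδ : 0 < δ) (N : ℕ) :
    ∃ n : ℕ, N ≤ n ∧ 1 ≤ n ∧ ∀ i ∈ F, Complex.abs (u i ^ n - 1) ≤ δ := by
  classical
  set N' : ℕ := max N 1 with hN'
  have hN'1 : 1 ≤ N' := le_max_right _ _
  set V : ℕ → (↥F → ℂ) := fun j i => u i ^ (j * N') with hV
  have hVb : ∀ j, V j ∈ Metric.closedBall (0 : ↥F → ℂ) 1 := by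
    intro j
    rw [Metric.mem_closedBall, dist_zero_right]
    refine pi_norm_le_iff_of_nonneg zero_le_one |>.2 fun i => ?_
    rw [Complex.norm_eq_abs, map_pow, hu i i.2, one_pow]
  obtain ⟨L, _, φ, hφ, hconv⟩ :=
    tendsto_subseq_of_bounded Metric.isBounded_closedBall hVb
  have hcs : CauchySeq (V ∘ φ) := hconv.cauchySeq
  obtain ⟨T, hT⟩ := Metric.cauchySeq_iff'.1 hcs δ hδ
  have hφlt : φ T < φ (T+1) := hφ (Nat.lt_succ_self T)
  refine ⟨(φ (T+1) - φ T) * N', ?_, ?_, ?_⟩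
  · calc N ≤ N' := le_max_left _ _
      _ = 1 * N' := (one_mul _).symm
      _ ≤ (φ (T+1) - φ T) * N' := by
          exact Nat.mul_le_mul_right _ (by omega)
  · have : 1 ≤ φ (T+1) - φ T := by omega
    calc 1 ≤ 1 * 1 := by norm_num
      _ ≤ (φ (T+1) - φ T) * N' := Nat.mul_le_mul this hN'1
  · intro i hi
    have key : u i ^ (φ T * N') * (u i ^ ((φ (T+1) - φ T) * N') - 1)
        = u i ^ (φ (T+1) * N') - u i ^ (φ T * N') := by
      rw [mul_sub, mul_one, ← pow_add]
      rw [← Nat.add_mul, Nat.add_sub_cancel' (le_of_lt hφlt)]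
    have habs : Complex.abs (u i ^ (φ T * N')) = 1 := by
      rw [map_pow, hu i hi, one_pow]
    have : Complex.abs (u i ^ ((φ (T+1) - φ T) * N') - 1)
        = Complex.abs (u i ^ (φ (T+1) * N') - u i ^ (φ T * N')) := by
      rw [← key, map_mul, habs, one_mul]
    rw [this]
    have hd := hT (T+1) (Nat.le_succ T)
    have hcoord : dist (V (φ (T+1)) ⟨i, hi⟩) (V (φ T) ⟨i, hi⟩)
        ≤ dist (V (φ (T+1))) (V (φ T)) := dist_le_pi_dist _ _ _
    have : dist (V (φ (T+1)) ⟨i, hi⟩) (V (φ T) ⟨i, hi⟩) < δ := by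
      refine lt_of_le_of_lt hcoord ?_
      simpa [dist_comm] using hd
    rw [Complex.dist_eq] at this
    exact le_of_lt this



private noncomputable def KA (a β : ℝ) : ℝ :=
  2*(β-a)*(1+|a-2*β|)*(1+1/(2*(β-a)))^2

private noncomputable def KB (a β : ℝ) : ℝ :=
  (2*(β-a))^2*(1+1/(2*(β-a)))^2


private lemma term_re_bound (a β : ℝ) (hβ : a < β) (z : ℂ)
    (hd : z + (a:ℂ) - 2*(β:ℂ) ≠ 0) (δ : ℝ) (hδ1 : δ ≤ 1)
    (hw : Complex.abs (((2*(β-a) : ℝ) : ℂ) / (z + a - 2*β)) ≤ δ) (n : ℕ) :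
    |(1 - ((z - a)/(z + a - 2*β))^n).re| ≤
      (n * KA a β + n^2*(1+δ)^n * KB a β)
        * ((1 + |z.re|)/(1 + Complex.abs (z + a - 2*β))^2) := by
  set d : ℂ := z + a - 2*β with hdd
  set w : ℂ := ((2*(β-a) : ℝ) : ℂ) / d with hww
  have hc1 : (0:ℝ) < 2*(β-a) := by linarith
  have hD : 0 < Complex.abs d := by
    simpa [Complex.abs.pos_iff] using hd
  have hf : (z - a)/d = 1 + w := by
    rw [hww]; field_simp; push_cast [hdd]; ring
  have habsw : Complex.abs w = 2*(β-a) / Complex.abs d := by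
    rw [hww, map_div₀, Complex.abs_ofReal, abs_of_pos hc1]
  have hDge : 2*(β-a) ≤ Complex.abs d := by
    rw [habsw] at hw
    have := le_trans hw hδ1
    rw [div_le_one hD] at this
    exact this
  have hK3 : (1 + Complex.abs d)^2 ≤ (1+1/(2*(β-a)))^2 * (Complex.abs d)^2 := by
    have h1 : 1 + Complex.abs d ≤ (1+1/(2*(β-a))) * Complex.abs d := by
      rw [add_mul, one_mul]
      have : (1:ℝ) ≤ 1/(2*(β-a)) * Complex.abs d := by
        rw [div_mul_eq_mul_div, one_mul, le_div_iff₀ hc1, one_mul]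
        exact hDge
      linarith
    calc (1 + Complex.abs d)^2 ≤ ((1+1/(2*(β-a))) * Complex.abs d)^2 := by
          apply pow_le_pow_left₀ (by positivity) h1
      _ = (1+1/(2*(β-a)))^2 * (Complex.abs d)^2 := by ring
  have hrew : w.re = 2*(β-a) * d.re / Complex.normSq d := by
    rw [hww, div_eq_mul_inv, Complex.re_ofReal_mul, Complex.inv_re]
    ring
  have hdre : |d.re| ≤ (1+|a-2*β|) * (1 + |z.re|) := by
    have hh : d.re = z.re + (a - 2*β) := by
      simp [hdd, Complex.add_re, Complex.sub_re]; ring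
    rw [hh]
    have h1 : |z.re + (a-2*β)| ≤ |z.re| + |a-2*β| := abs_add_le _ _
    have h2 : (0:ℝ) ≤ |z.re| := abs_nonneg _
    have h3 : (0:ℝ) ≤ |a-2*β| := abs_nonneg _
    nlinarith
  have hnormSq : Complex.normSq d = (Complex.abs d)^2 := (Complex.sq_abs d).symm
  have hRew : |w.re| ≤ 2*(β-a) * ((1+|a-2*β|) * (1 + |z.re|)) / (Complex.abs d)^2 := by
    rw [hrew, hnormSq, abs_div, _root_.abs_of_nonneg (by positivity : (0:ℝ) ≤ (Complex.abs d)^2)]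
    gcongr
    rw [abs_mul, abs_of_pos hc1]
    exact mul_le_mul_of_nonneg_left hdre (le_of_lt hc1)
  -- split the real part
  have hT := T_rec_bound w δ hw n
  have hcast : ((n:ℂ)*w).re = (n:ℝ) * w.re := by
    rw [show ((n:ℂ)) = (((n:ℝ)):ℂ) by push_cast; rfl, Complex.re_ofReal_mul]
  have hsplit : (1 - (1+w)^n).re = (1 - (1+w)^n + n*w).re - (n:ℝ) * w.re := by
    rw [Complex.add_re, hcast]; ring
  rw [hf, hsplit]
  have step : |(1 - (1+w)^n + n*w).re - (n:ℝ) * w.re|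
      ≤ (n:ℝ)^2 * (Complex.abs w)^2 * (1+δ)^n + (n:ℝ) * |w.re| := by
    refine le_trans (abs_sub _ _) ?_
    have h1 : |(1 - (1+w)^n + n*w).re| ≤ Complex.abs (1 - (1+w)^n + n*w) :=
      Complex.abs_re_le_abs _
    have h2 : |(n:ℝ) * w.re| = (n:ℝ) * |w.re| := by
      rw [abs_mul, Nat.abs_cast]
    linarith
  refine le_trans step ?_
  -- final arithmetic
  set D := Complex.abs d with hDdef
  set X := |z.re| with hX
  set c1 := 2*(β-a) with hc1d
  set c2 := 1+|a-2*β| with hc2d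
  set K3 := (1+1/(2*(β-a)))^2 with hK3d
  have hwsq : (Complex.abs w)^2 = c1^2 * (1/D^2) := by
    rw [habsw]; field_simp
  have hu : 1/D^2 ≤ K3 * (1/(1+D)^2) := by
    have h0 : (1:ℝ)/D^2 ≤ K3/(1+D)^2 := by
      rw [div_le_div_iff₀ (by positivity) (by positivity)]
      nlinarith [hK3]
    calc 1/D^2 ≤ K3/(1+D)^2 := h0
      _ = K3 * (1/(1+D)^2) := by ring
  have hX1 : (1:ℝ) ≤ 1 + X := by
    have : (0:ℝ) ≤ X := abs_nonneg _
    linarith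
  have hP : (0:ℝ) ≤ (1+δ)^n := by
    have : (0:ℝ) ≤ 1 + δ := by
      have := Complex.abs.nonneg w; linarith [le_trans this hw]
    positivity
  have hc2p : (0:ℝ) < c2 := by
    have := abs_nonneg (a-2*β); rw [hc2d]; linarith
  have hK3p : (0:ℝ) < K3 := by rw [hK3d]; positivity
  have hnn : (0:ℝ) ≤ (n:ℝ) := Nat.cast_nonneg n
  have hvv : (0:ℝ) ≤ 1/(1+D)^2 := by positivity
  have goalKA : KA a β = c1*c2*K3 := by rw [KA, hc1d, hc2d, hK3d]
  have goalKB : KB a β = c1^2*K3 := by rw [KB, hc1d, hK3d]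
  rw [goalKA, goalKB, hwsq]
  have s1 : (n:ℝ) * |w.re| ≤ (n:ℝ) * (c1*c2*K3) * ((1+X) * (1/(1+D)^2)) := by
    have e1 : (n:ℝ) * |w.re| ≤ (n:ℝ) * (c1 * (c2 * (1+X)) * (1/D^2)) := by
      apply mul_le_mul_of_nonneg_left ?_ hnn
      calc |w.re| ≤ c1 * (c2 * (1+X)) / D^2 := hRew
        _ = c1 * (c2 * (1+X)) * (1/D^2) := by ring
    refine le_trans e1 ?_
    have e2 : c1 * (c2 * (1+X)) * (1/D^2) ≤ c1 * (c2 * (1+X)) * (K3 * (1/(1+D)^2)) :=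
      mul_le_mul_of_nonneg_left hu (by positivity)
    have e3 : (n:ℝ) * (c1 * (c2 * (1+X)) * (1/D^2)) ≤ (n:ℝ) * (c1 * (c2 * (1+X)) * (K3 * (1/(1+D)^2))) :=
      mul_le_mul_of_nonneg_left e2 hnn
    calc (n:ℝ) * (c1 * (c2 * (1+X)) * (1/D^2))
        ≤ (n:ℝ) * (c1 * (c2 * (1+X)) * (K3 * (1/(1+D)^2))) := e3
      _ = (n:ℝ) * (c1*c2*K3) * ((1+X) * (1/(1+D)^2)) := by ring
  have s2 : (n:ℝ)^2 * (c1^2 * (1/D^2)) * (1+δ)^n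
      ≤ (n:ℝ)^2 * (1+δ)^n * (c1^2*K3) * ((1+X) * (1/(1+D)^2)) := by
    have e2 : c1^2 * (1/D^2) ≤ c1^2 * (K3 * (1/(1+D)^2)) :=
      mul_le_mul_of_nonneg_left hu (by positivity)
    have e4 : c1^2 * (K3 * (1/(1+D)^2)) ≤ c1^2 * (K3 * ((1+X) * (1/(1+D)^2))) := by
      apply mul_le_mul_of_nonneg_left ?_ (by positivity)
      apply mul_le_mul_of_nonneg_left ?_ (le_of_lt hK3p)
      nlinarith
    have := mul_le_mul_of_nonneg_left (le_trans e2 e4)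
      (mul_nonneg (sq_nonneg (n:ℝ)) hP)
    calc (n:ℝ)^2 * (c1^2 * (1/D^2)) * (1+δ)^n
        = (n:ℝ)^2 * (1+δ)^n * (c1^2 * (1/D^2)) := by ring
      _ ≤ (n:ℝ)^2 * (1+δ)^n * (c1^2 * (K3 * ((1+X) * (1/(1+D)^2)))) := this
      _ = (n:ℝ)^2 * (1+δ)^n * (c1^2*K3) * ((1+X) * (1/(1+D)^2)) := by ring
  calc (n:ℝ)^2 * (c1^2 * (1/D^2)) * (1+δ)^n + (n:ℝ) * |w.re|
      ≤ (n:ℝ)^2 * (1+δ)^n * (c1^2*K3) * ((1+X) * (1/(1+D)^2))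
        + (n:ℝ) * (c1*c2*K3) * ((1+X) * (1/(1+D)^2)) := add_le_add s2 s1
    _ = ((n:ℝ) * (c1*c2*K3) + (n:ℝ)^2*(1+δ)^n * (c1^2*K3)) * ((1+X)/(1+D)^2) := by
        ring

/-- Abstract form of the modified Li criterion (Theorem 3.2 of the paper). -/
theorem modified_li_criterion_abstract (a β : ℝ) (hβ : a < β)
    {ι : Type*} [Countable ι] (ρ : ι → ℂ)
    (hne : ∀ i, ρ i ≠ 2 * β - a) (hne' : ∀ i, ρ i ≠ a)
    (hsum : Summable fun i =>
      (1 + |(ρ i).re|) / (1 + ‖ρ i + a - 2 * β‖) ^ 2)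
    (hsum' : Summable fun i =>
      (1 + |(ρ i).re|) / (1 + ‖ρ i - a‖) ^ 2)
    (σ : ι ≃ ι) (hσ : ∀ i, ρ (σ i) = 2 * β - ρ i) :
    (∀ n : ℕ, 1 ≤ n →
      Summable fun i => (1 - ((ρ i - a) / (ρ i + a - 2 * β)) ^ n).re) ∧
    (((∀ i, (ρ i).re = β) ↔
      (∀ n : ℕ, 1 ≤ n →
        0 ≤ ∑' i, (1 - ((ρ i - a) / (ρ i + a - 2 * β)) ^ n).re)) ∧
    ((∀ n : ℕ, 1 ≤ n →
        0 ≤ ∑' i, (1 - ((ρ i - a) / (ρ i + a - 2 * β)) ^ n).re) ↔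
      (∀ ε : ℝ, 0 < ε → ∃ c : ℝ, 0 < c ∧ ∀ n : ℕ, 1 ≤ n →
        -c * Real.exp (ε * n) ≤
          ∑' i, (1 - ((ρ i - a) / (ρ i + a - 2 * β)) ^ n).re))) := by
  classical
  have hc1 : (0:ℝ) < 2*(β-a) := by linarith
  set g : ι → ℝ := fun i => (1 + |(ρ i).re|) / (1 + Complex.abs (ρ i + a - 2 * β)) ^ 2
    with hgdef
  have hgsum : Summable g := hsum
  have hgnn : ∀ i, 0 ≤ g i := fun i => by
    have := abs_nonneg ((ρ i).re); positivity
  have hd0 : ∀ i, ρ i + (a:ℂ) - 2*(β:ℂ) ≠ 0 := by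
    intro i h
    exact hne i (by linear_combination h)
  have habsD : ∀ i, 0 < Complex.abs (ρ i + a - 2*β) := fun i => by
    simpa [Complex.abs.pos_iff] using hd0 i
  set w : ι → ℂ := fun i => ((2*(β-a):ℝ):ℂ) / (ρ i + a - 2*β) with hwdef
  set fc : ι → ℂ := fun i => (ρ i - a)/(ρ i + a - 2*β) with hfcdef
  have habsw : ∀ i, Complex.abs (w i) = 2*(β-a) / Complex.abs (ρ i + a - 2*β) := by
    intro i
    rw [hwdef]
    simp only []
    rw [map_div₀, Complex.abs_ofReal, abs_of_pos hc1]
  have hfcw : ∀ i, fc i = 1 + w i := by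
    intro i
    have h2 : 1 + w i = ((ρ i + (a:ℂ) - 2*(β:ℂ)) + ((2*(β-a):ℝ):ℂ)) / (ρ i + a - 2*β) := by
      show _ = _
      rw [add_div, div_self (hd0 i)]
    rw [h2]
    show (ρ i - (a:ℂ))/(ρ i + a - 2*β) = _
    congr 1
    push_cast
    ring
  -- finiteness of bad sets
  have hfin : ∀ δ : ℝ, 0 < δ → {i | δ < Complex.abs (w i)}.Finite := by
    intro δ hδ
    have hev : ∀ᶠ i in Filter.cofinite, g i < (1/(1 + 2*(β-a)/δ))^2 :=
      hgsum.tendsto_cofinite_zero.eventually_lt_const (by positivity)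
    rw [Filter.eventually_cofinite] at hev
    refine hev.subset ?_
    intro i hi
    simp only [Set.mem_setOf_eq, not_lt]
    set D := Complex.abs (ρ i + a - 2*β) with hDdef
    have hD : 0 < D := habsD i
    have hDlt : D < 2*(β-a)/δ := by
      have h1 : δ < 2*(β-a)/D := by rw [← habsw i]; exact hi
      rw [lt_div_iff₀ hD] at h1
      rw [lt_div_iff₀ hδ]
      linarith [h1]
    have hre : (0:ℝ) ≤ |(ρ i).re| := abs_nonneg _
    have h2 : (1+D)^2 ≤ (1 + 2*(β-a)/δ)^2 := by nlinarith
    have h3 : (0:ℝ) < (1 + 2*(β-a)/δ) := by positivity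
    rw [hgdef]
    simp only []
    rw [div_pow, one_pow, div_le_div_iff₀ (by positivity) (by positivity)]
    nlinarith
  have hKA0 : 0 ≤ KA a β := by
    rw [KA]
    have := abs_nonneg (a - 2*β)
    positivity
  have hKB0 : 0 ≤ KB a β := by rw [KB]; positivity
  have hterm : ∀ (δ:ℝ), δ ≤ 1 → ∀ i, Complex.abs (w i) ≤ δ → ∀ n : ℕ,
      |(1 - fc i ^ n).re| ≤ (n * KA a β + n^2*(1+δ)^n * KB a β) * g i := by
    intro δ hδ i hi n
    exact term_re_bound a β hβ (ρ i) (hd0 i) δ hδ hi n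
  have hCg : ∀ C : ℝ, Summable (fun i => C * g i) := fun C => hgsum.mul_left C
  -- summability
  have hsummand : ∀ n : ℕ, Summable (fun i => (1 - fc i ^ n).re) := by
    intro n
    set s : Set ι := {i | 1 < Complex.abs (w i)} with hs
    have hsfin : s.Finite := hfin 1 one_pos
    have h1 : Summable ((fun i => (1 - fc i ^ n).re) ∘ ((↑) : s → ι)) := by
      haveI := hsfin.to_subtype
      exact Summable.of_finite
    have h2 : Summable ((fun i => (1 - fc i ^ n).re) ∘ ((↑) : ↥sᶜ → ι)) := by
      apply Summable.of_abs
      apply Summable.of_nonneg_of_le (fun x => abs_nonneg _) ?_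
        (((hCg ((n : ℝ) * KA a β + (n:ℝ)^2*(1+1)^n * KB a β))).subtype sᶜ)
      rintro ⟨i, hi⟩
      have hwi : Complex.abs (w i) ≤ 1 := by
        have : ¬ (1 < Complex.abs (w i)) := hi
        linarith [not_lt.1 this]
      exact hterm 1 le_rfl i hwi n
    exact summable_subtype_and_compl.1 ⟨h1, h2⟩
  -- tail bound
  have tail_bound : ∀ (δ:ℝ), δ ≤ 1 → ∀ (Fs : Finset ι),
      (∀ i, i ∉ Fs → Complex.abs (w i) ≤ δ) → ∀ n : ℕ, 0 ≤ (1:ℝ)+δ →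
      (∑' i, (1 - fc i ^ n).re) ≤ (∑ i ∈ Fs, (1 - fc i ^ n).re)
        + ((n:ℝ) * KA a β + (n:ℝ)^2*(1+δ)^n * KB a β) * (∑' i, g i) := by
    intro δ hδ1 Fs hFs n hδpos
    have hCnn : 0 ≤ (n:ℝ) * KA a β + (n:ℝ)^2*(1+δ)^n * KB a β := by positivity
    rw [← Summable.sum_add_tsum_compl (s := Fs) (hsummand n)]
    apply add_le_add_right
    calc ∑' (x : ↥(↑Fs:Set ι)ᶜ), (1 - fc (↑x) ^ n).re
        ≤ ∑' (x : ↥(↑Fs:Set ι)ᶜ), ((n:ℝ)*KA a β + (n:ℝ)^2*(1+δ)^n*KB a β) * g ↑x := by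
          apply Summable.tsum_le_tsum ?_ ((hsummand n).subtype _) ((hCg _).subtype _)
          rintro ⟨i, hi⟩
          have hnotin : i ∉ Fs := by simpa using hi
          exact le_trans (le_abs_self _) (hterm δ hδ1 i (hFs i hnotin) n)
      _ ≤ ∑' i, ((n:ℝ)*KA a β + (n:ℝ)^2*(1+δ)^n*KB a β) * g i :=
          Summable.tsum_subtype_le _ _ (fun i => mul_nonneg hCnn (hgnn i)) (hCg _)
      _ = ((n:ℝ)*KA a β + (n:ℝ)^2*(1+δ)^n*KB a β) * ∑' i, g i := tsum_mul_left
  -- identity facts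
  have absfc_sq : ∀ i, (Complex.abs (ρ i - a))^2 - (Complex.abs (ρ i + a - 2*β))^2
      = 4*(β-a)*((ρ i).re - β) := fun i => absSq_identity a β (ρ i)
  have habsfc : ∀ i, Complex.abs (fc i)
      = Complex.abs (ρ i - a) / Complex.abs (ρ i + a - 2*β) := by
    intro i; rw [hfcdef]; simp only []; exact map_div₀ _ _ _
  -- P1 → P2
  have hP12 : (∀ i, (ρ i).re = β) → ∀ n : ℕ, 1 ≤ n → 0 ≤ ∑' i, (1 - fc i ^ n).re := by
    intro h1 n _
    apply tsum_nonneg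
    intro i
    have hD := habsD i
    have hle1 : Complex.abs (fc i) ≤ 1 := by
      rw [habsfc i, div_le_one hD]
      have h2 := absfc_sq i
      rw [h1 i] at h2
      nlinarith [Complex.abs.nonneg (ρ i - a), hD]
    have h3 : (fc i ^ n).re ≤ 1 := by
      refine le_trans (Complex.re_le_abs _) ?_
      rw [map_pow]
      exact pow_le_one₀ (Complex.abs.nonneg _) hle1
    simp only [Complex.sub_re, Complex.one_re]
    linarith
  -- P2 → P3
  have hP23 : (∀ n : ℕ, 1 ≤ n → 0 ≤ ∑' i, (1 - fc i ^ n).re) →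
      (∀ ε : ℝ, 0 < ε → ∃ c : ℝ, 0 < c ∧ ∀ n : ℕ, 1 ≤ n →
        -c * Real.exp (ε * n) ≤ ∑' i, (1 - fc i ^ n).re) := by
    intro h2 ε hε
    refine ⟨1, one_pos, fun n hn => ?_⟩
    have := h2 n hn
    have hexp : 0 < Real.exp (ε * n) := Real.exp_pos _
    nlinarith
  -- P3 → P1
  have hP31 : (∀ ε : ℝ, 0 < ε → ∃ c : ℝ, 0 < c ∧ ∀ n : ℕ, 1 ≤ n →
        -c * Real.exp (ε * n) ≤ ∑' i, (1 - fc i ^ n).re) → (∀ i, (ρ i).re = β) := by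
    intro h3
    by_contra hcon
    push_neg at hcon
    obtain ⟨i₀, hi₀⟩ := hcon
    have hre_σ : ∀ i, (ρ (σ i)).re = 2*β - (ρ i).re := by
      intro i
      rw [hσ i]
      simp [Complex.sub_re, Complex.mul_re, Complex.ofReal_re, Complex.ofReal_im]
    obtain ⟨j, hj⟩ : ∃ j, β < (ρ j).re := by
      rcases lt_or_gt_of_ne hi₀ with h | h
      · exact ⟨σ i₀, by rw [hre_σ]; linarith⟩
      · exact ⟨i₀, h⟩
    have hfj : 1 < Complex.abs (fc j) := by
      rw [habsfc j, one_lt_div (habsD j)]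
      nlinarith [absfc_sq j, habsD j, Complex.abs.nonneg (ρ j - (a:ℂ))]
    have hsub1 : ∀ i, Complex.abs (fc i) - 1 ≤ Complex.abs (w i) := by
      intro i
      have hw' : w i = fc i - 1 := by rw [hfcw i]; ring
      rw [hw']
      calc Complex.abs (fc i) - 1 = ‖fc i‖ - ‖(1:ℂ)‖ := by
            simp [Complex.norm_eq_abs]
        _ ≤ ‖fc i - 1‖ := norm_sub_norm_le _ _
        _ = Complex.abs (fc i - 1) := Complex.norm_eq_abs _
    set θ := Complex.abs (fc j) with hθ
    have hF0fin : {i | θ ≤ Complex.abs (fc i)}.Finite := by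
      apply (hfin ((θ-1)/2) (by linarith)).subset
      intro i hi
      simp only [Set.mem_setOf_eq] at hi ⊢
      have := hsub1 i
      linarith
    have hjmem : j ∈ hF0fin.toFinset := by
      rw [Set.Finite.mem_toFinset]; exact le_refl θ
    have hF0ne : hF0fin.toFinset.Nonempty := ⟨j, hjmem⟩
    set q := hF0fin.toFinset.sup' hF0ne (fun i => Complex.abs (fc i)) with hqdef
    have hqθ : θ ≤ q := Finset.le_sup' (f := fun i => Complex.abs (fc i)) hjmem
    have hq1 : 1 < q := lt_of_lt_of_le hfj hqθ
    have hq0 : (0:ℝ) < q := by linarith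
    have hq_all : ∀ i, Complex.abs (fc i) ≤ q := by
      intro i
      by_cases hi : θ ≤ Complex.abs (fc i)
      · exact Finset.le_sup' (f := fun i => Complex.abs (fc i))
          ((Set.Finite.mem_toFinset _).2 hi)
      · push_neg at hi; linarith
    obtain ⟨imax, himax_mem, himax⟩ :=
      Finset.exists_mem_eq_sup' hF0ne (fun i => Complex.abs (fc i))
    have himax_q : Complex.abs (fc imax) = q := himax.symm
    set ε := Real.log q / 2 with hεdef
    have hε : 0 < ε := by
      have := Real.log_pos hq1; rw [hεdef]; linarith
    have hexpε : Real.exp ε < q := by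
      have h1 : Real.exp (Real.log q / 2) < Real.exp (Real.log q) :=
        Real.exp_lt_exp.2 (by linarith [Real.log_pos hq1])
      rwa [Real.exp_log hq0] at h1
    obtain ⟨c, hc0, hcall⟩ := h3 ε hε
    set δ₀ := min 1 ((q-1)/2) with hδ₀def
    have hδ₀0 : 0 < δ₀ := lt_min one_pos (by linarith)
    have hδ₀1 : δ₀ ≤ 1 := min_le_left _ _
    have hδ₀half : δ₀ ≤ (q-1)/2 := min_le_right _ _
    have h1δ₀q : 1 + δ₀ < q := by linarith
    set Fs := (hfin δ₀ hδ₀0).toFinset with hFsdef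
    have hFs_out : ∀ i, i ∉ Fs → Complex.abs (w i) ≤ δ₀ := by
      intro i hi
      rw [hFsdef, Set.Finite.mem_toFinset] at hi
      simp only [Set.mem_setOf_eq, not_lt] at hi
      exact hi
    have himax_in : imax ∈ Fs := by
      rw [hFsdef, Set.Finite.mem_toFinset]
      show δ₀ < Complex.abs (w imax)
      have := hsub1 imax
      rw [himax_q] at this
      linarith
    set Fmax := Fs.filter (fun i => Complex.abs (fc i) = q) with hFmaxdef
    have himax_in2 : imax ∈ Fmax := Finset.mem_filter.2 ⟨himax_in, himax_q⟩
    set G := ∑' i, g i with hGdef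
    set E : ℕ → ℝ := fun n => (Fs.card:ℝ) * (q⁻¹)^n
      + (KA a β * G) * ((n:ℝ) * (q⁻¹)^n)
      + (KB a β * G) * ((n:ℝ)^2 * ((1+δ₀)*q⁻¹)^n)
      + (∑ i ∈ Fs \ Fmax, (Complex.abs (fc i) * q⁻¹)^n)
      + c * ((Real.exp ε) * q⁻¹)^n with hEdef
    have hqinv : 0 < q⁻¹ := by positivity
    have hqinvmul : q * q⁻¹ = 1 := mul_inv_cancel₀ (ne_of_gt hq0)
    have hqinv1 : q⁻¹ < 1 := by
      rw [← hqinvmul]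
      nlinarith
    have t0 : Tendsto (fun n:ℕ => (q⁻¹:ℝ)^n) atTop (nhds 0) :=
      tendsto_pow_atTop_nhds_zero_of_lt_one (le_of_lt hqinv) hqinv1
    have t1 : Tendsto (fun n:ℕ => (n:ℝ) * (q⁻¹)^n) atTop (nhds 0) := by
      have h := tendsto_pow_const_mul_const_pow_of_abs_lt_one 1
        (r := q⁻¹) (by rw [abs_of_pos hqinv]; exact hqinv1)
      simpa using h
    have t2 : Tendsto (fun n:ℕ => (n:ℝ)^2 * ((1+δ₀)*q⁻¹)^n) atTop (nhds 0) := by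
      apply tendsto_pow_const_mul_const_pow_of_abs_lt_one 2
      rw [abs_of_pos (by positivity)]
      calc (1+δ₀) * q⁻¹ < q * q⁻¹ := by
            apply mul_lt_mul_of_pos_right h1δ₀q hqinv
        _ = 1 := hqinvmul
    have t3 : Tendsto (fun n:ℕ => ∑ i ∈ Fs \ Fmax, (Complex.abs (fc i) * q⁻¹)^n)
        atTop (nhds 0) := by
      have h0 : (0:ℝ) = ∑ i ∈ Fs \ Fmax, (0:ℝ) := by simp
      rw [h0]
      apply tendsto_finset_sum
      intro i hi
      apply tendsto_pow_atTop_nhds_zero_of_lt_one (by positivity)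
      have hiq : Complex.abs (fc i) < q := by
        rcases Finset.mem_sdiff.1 hi with ⟨hiFs, hin⟩
        refine lt_of_le_of_ne (hq_all i) ?_
        intro h
        exact hin (Finset.mem_filter.2 ⟨hiFs, h⟩)
      calc Complex.abs (fc i) * q⁻¹ < q * q⁻¹ := by
            apply mul_lt_mul_of_pos_right hiq hqinv
        _ = 1 := hqinvmul
    have t4 : Tendsto (fun n:ℕ => c * ((Real.exp ε) * q⁻¹)^n) atTop (nhds 0) := by
      rw [show (0:ℝ) = c * 0 by ring]
      apply Tendsto.const_mul
      apply tendsto_pow_atTop_nhds_zero_of_lt_one (by positivity)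
      calc Real.exp ε * q⁻¹ < q * q⁻¹ := mul_lt_mul_of_pos_right hexpε hqinv
        _ = 1 := hqinvmul
    have hE : Tendsto E atTop (nhds 0) := by
      rw [hEdef]
      have hzero : (0:ℝ) = (Fs.card:ℝ) * 0 + (KA a β * G) * 0
          + (KB a β * G) * 0 + 0 + 0 := by ring
      rw [hzero]
      exact ((((t0.const_mul _).add (t1.const_mul _)).add (t2.const_mul _)).add t3).add t4
    have hev : ∀ᶠ n in atTop, E n < 1/2 := hE.eventually_lt_const one_half_pos
    obtain ⟨N₀, hN₀⟩ := eventually_atTop.1 hev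
    have hunit : ∀ i ∈ Fmax, Complex.abs ((fc i) / (q:ℂ)) = 1 := by
      intro i hi
      have hqi : Complex.abs (fc i) = q := (Finset.mem_filter.1 hi).2
      rw [map_div₀, hqi, Complex.abs_ofReal, abs_of_pos hq0, div_self (ne_of_gt hq0)]
    obtain ⟨n, hnN, hn1, hgood⟩ :=
      return_to_one Fmax (fun i => fc i / (q:ℂ)) hunit (1/2) one_half_pos N₀
    have hqpow : (0:ℝ) < q^n := by positivity
    have hmax_term : ∀ i ∈ Fmax, q^n * (1/2) ≤ (fc i ^ n).re := by
      intro i hi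
      have hqi : Complex.abs (fc i) = q := (Finset.mem_filter.1 hi).2
      have hqC : (q:ℂ) ≠ 0 := Complex.ofReal_ne_zero.2 (ne_of_gt hq0)
      have hfcqi : fc i = (q:ℂ) * (fc i / q) := by
        field_simp
      have hre : (1:ℝ)/2 ≤ ((fc i / (q:ℂ))^n).re := by
        have h5 := hgood i hi
        have h6 : ((fc i / (q:ℂ))^n).re = 1 + ((fc i / (q:ℂ))^n - 1).re := by
          simp [Complex.sub_re]
        rw [h6]
        have h7 : |((fc i / (q:ℂ))^n - 1).re| ≤ 1/2 :=
          le_trans (Complex.abs_re_le_abs _) h5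
        linarith [(abs_le.1 h7).1]
      calc q^n * (1/2) ≤ q^n * ((fc i / (q:ℂ))^n).re := by
            apply mul_le_mul_of_nonneg_left hre (le_of_lt hqpow)
        _ = (fc i ^ n).re := by
            conv_rhs => rw [hfcqi]
            rw [mul_pow, ← Complex.ofReal_pow, Complex.re_ofReal_mul]
    have hmax_sum : q^n * (1/2) ≤ ∑ i ∈ Fmax, (fc i ^ n).re := by
      have hcard : 1 ≤ Fmax.card := Finset.card_pos.2 ⟨imax, himax_in2⟩
      have h8 := Finset.card_nsmul_le_sum Fmax (fun i => (fc i ^ n).re) (q^n * (1/2))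
        (fun i hi => hmax_term i hi)
      rw [nsmul_eq_mul] at h8
      calc q^n * (1/2) = 1 * (q^n * (1/2)) := by ring
        _ ≤ (Fmax.card:ℝ) * (q^n*(1/2)) := by
            apply mul_le_mul_of_nonneg_right ?_ (by positivity)
            exact_mod_cast hcard
        _ ≤ ∑ i ∈ Fmax, (fc i ^ n).re := h8
    have hsplit_sum : ∑ i ∈ Fs, (1 - fc i ^ n).re
        = (Fs.card:ℝ) - ∑ i ∈ Fs, (fc i ^ n).re := by
      simp only [Complex.sub_re, Complex.one_re]
      rw [Finset.sum_sub_distrib, Finset.sum_const, nsmul_eq_mul, mul_one]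
    have hFs_split : ∑ i ∈ Fs, (fc i^n).re
        = ∑ i ∈ Fs \ Fmax, (fc i^n).re + ∑ i ∈ Fmax, (fc i^n).re :=
      (Finset.sum_sdiff (Finset.filter_subset _ _)).symm
    have hlow : -(∑ i ∈ Fs \ Fmax, (Complex.abs (fc i))^n)
        ≤ ∑ i ∈ Fs \ Fmax, (fc i^n).re := by
      rw [← Finset.sum_neg_distrib]
      apply Finset.sum_le_sum
      intro i _
      have h9 : |(fc i ^ n).re| ≤ Complex.abs (fc i ^ n) := Complex.abs_re_le_abs _
      rw [map_pow] at h9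
      linarith [(abs_le.1 h9).1]
    have hS := tail_bound δ₀ hδ₀1 Fs hFs_out n (by linarith)
    have hEn := hN₀ n hnN
    have hexpn : Real.exp (ε*n) = (Real.exp ε)^n := by
      rw [mul_comm, Real.exp_nat_mul]
    have hWq : E n * q^n = (Fs.card:ℝ)
        + ((n:ℝ)*KA a β + (n:ℝ)^2*(1+δ₀)^n*KB a β)*G
        + (∑ i ∈ Fs \ Fmax, (Complex.abs (fc i))^n) + c * Real.exp (ε*n) := by
      rw [hexpn, hEdef]
      simp only [mul_pow]
      rw [← Finset.sum_mul, inv_pow]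
      have hqn := ne_of_gt hqpow
      field_simp
      ring
    have hlt : (Fs.card:ℝ) + ((n:ℝ)*KA a β + (n:ℝ)^2*(1+δ₀)^n*KB a β)*G
        + (∑ i ∈ Fs \ Fmax, (Complex.abs (fc i))^n) + c * Real.exp (ε*n)
        < q^n * (1/2) := by
      rw [← hWq]
      calc E n * q^n < (1/2) * q^n := mul_lt_mul_of_pos_right hEn hqpow
        _ = q^n * (1/2) := by ring
    have hfromh3 := hcall n hn1
    rw [hsplit_sum, hFs_split] at hS
    linarith
  exact ⟨fun n _ => hsummand n,
    ⟨fun h1 => hP12 h1, fun h2 => hP31 (hP23 h2)⟩,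
    ⟨hP23, fun h3 => hP12 (hP31 h3)⟩⟩
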